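/- For a logic program with preferences (P,<) where P is stratified (has no default-negation cycles, i.e., admits a stratification), the preferred answer sets under semantics G coincide exactly with the answer sets of P. -/

import Mathlib

/-- A literal over atoms `A`: `(true, a)` is the atom `a`, `(false, a)` is `¬ a`. -/
abbrev Lit (A : Type) := Bool × A

/-- A rule with head, positive body and negative body. -/
structure Rule (A : Type) where
  head : Lit A
  pos : Set (Lit A)
  neg : Set (Lit A)

variable {A : Type}

/-- Heads of a set of rules. -/
def headSet (R : Set (Rule A)) : Set (Lit A) := Rule.head '' R

/-- `R ⊆ P` positively satisfies `P`. -/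
def PosSat (P R : Set (Rule A)) : Prop :=
  R ⊆ P ∧ ∀ r ∈ P, r.pos ⊆ headSet R → r ∈ R

/-- The minimal set of rules positively satisfying `P`. -/
def MP (P : Set (Rule A)) : Set (Rule A) := ⋂₀ {R | PosSat P R}

/-- A set of rules defeats a rule. -/
def defeatsRule (R : Set (Rule A)) (r : Rule A) : Prop :=
  (headSet R ∩ r.neg).Nonempty

/-- A set of rules defeats a set of rules. -/
def defeatsSet (R₁ R₂ : Set (Rule A)) : Prop := ∃ r ∈ R₂, defeatsRule R₁ r

/-- The reduct `P^R` removes each rule defeated by `R`. -/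
def reduct (P R : Set (Rule A)) : Set (Rule A) := {r ∈ P | ¬ defeatsRule R r}

/-- `R ⊆ P` is a generating set of `P` iff `R = MP (P^R)`. -/
def GenSet (P R : Set (Rule A)) : Prop := R ⊆ P ∧ R = MP (reduct P R)

/-- A set of literals is consistent iff it contains no complementary pair. -/
def Consistent (S : Set (Lit A)) : Prop :=
  ∀ a : A, ¬ (((true, a) ∈ S) ∧ ((false, a) ∈ S))

/-- Answer sets via generating sets. -/
def AnswerSet (P : Set (Rule A)) (S : Set (Lit A)) : Prop :=
  Consistent S ∧ ∃ R, GenSet P R ∧ headSet R = S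

/-- `Γ_S(P)`: rules whose positive body is in `S` and negative body disjoint from `S`. -/
def Gamma (S : Set (Lit A)) (P : Set (Rule A)) : Set (Rule A) :=
  {r ∈ P | r.pos ⊆ S ∧ r.neg ∩ S = ∅}

/-- Fragments of a program. -/
def Frag (P : Set (Rule A)) : Set (Set (Rule A)) := {R | R ⊆ P ∧ MP R = R}

/-- Fragment reduct: remove fragments defeated by a member of `E`. -/
def fragReduct (P : Set (Rule A)) (E : Set (Set (Rule A))) : Set (Set (Rule A)) :=
  {X ∈ Frag P | ¬ ∃ Y ∈ E, defeatsSet Y X}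

/-- Stable fragment sets. -/
def StableFragSet (P : Set (Rule A)) (E : Set (Set (Rule A))) : Prop :=
  E ⊆ Frag P ∧ fragReduct P E = E

/-- Mutually defeating (conflicting) sets of rules. -/
def Conflicting (X Y : Set (Rule A)) : Prop := defeatsSet X Y ∧ defeatsSet Y X

/-- `X` overrides `Y` w.r.t. the preference relation `lt`. -/
def Overrides (lt : Rule A → Rule A → Prop) (X Y : Set (Rule A)) : Prop :=
  Conflicting X Y ∧
    ∀ r₁ ∈ X, defeatsRule Y r₁ → ∃ r₂ ∈ Y, defeatsRule X r₂ ∧ lt r₂ r₁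

/-- Preferred fragment reduct (semantics G). -/
def prefFragReduct (lt : Rule A → Rule A → Prop) (P : Set (Rule A))
    (E : Set (Set (Rule A))) : Set (Set (Rule A)) :=
  {X ∈ Frag P | ¬ ∃ Y ∈ E, defeatsSet Y X ∧ ¬ Overrides lt X Y}

/-- Preferred stable fragment sets (semantics G). -/
def PrefStableFragSet (lt : Rule A → Rule A → Prop) (P : Set (Rule A))
    (E : Set (Set (Rule A))) : Prop :=
  E ⊆ Frag P ∧ prefFragReduct lt P E = E

/-- Preferred answer sets under the fragment-based semantics G. -/
def GPrefAnswerSet (lt : Rule A → Rule A → Prop) (P : Set (Rule A))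
    (S : Set (Lit A)) : Prop :=
  Consistent S ∧ ∃ E, PrefStableFragSet lt P E ∧ headSet (⋃₀ E) = S

/-- `T(r,R)` for semantics GNO. -/
def Trules (lt : Rule A → Rule A → Prop) (r : Rule A) (R : Set (Rule A)) :
    Set (Rule A) :=
  MP {p ∈ R | ¬ lt p r}

/-- GNO reduct: remove rules `r` with `body⁻(r) ∩ head(T(r,R)) ≠ ∅`. -/
def gnoReduct (lt : Rule A → Rule A → Prop) (P R : Set (Rule A)) : Set (Rule A) :=
  {r ∈ P | ¬ (r.neg ∩ headSet (Trules lt r R)).Nonempty}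

/-- GNO-preferred generating sets. -/
def GNOPrefGen (lt : Rule A → Rule A → Prop) (P R : Set (Rule A)) : Prop :=
  GenSet P R ∧ R = MP (gnoReduct lt P R)

/-- GNO-preferred answer sets. -/
def GNOPrefAnswerSet (lt : Rule A → Rule A → Prop) (P : Set (Rule A))
    (S : Set (Lit A)) : Prop :=
  Consistent S ∧ ∃ R, GNOPrefGen lt P R ∧ headSet R = S

/-- A rule defeats a rule. -/
def defeats (r₁ r₂ : Rule A) : Prop := r₁.head ∈ r₂.neg

/-- `r₁` directly overrides `r₂` w.r.t. `lt`. -/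
def DirOverrides (lt : Rule A → Rule A → Prop) (r₁ r₂ : Rule A) : Prop :=
  (defeats r₁ r₂ ∧ defeats r₂ r₁) ∧ lt r₂ r₁

/-- D-reduct for the direct-conflict semantics. -/
def dReduct (lt : Rule A → Rule A → Prop) (P R : Set (Rule A)) : Set (Rule A) :=
  {r₁ ∈ P | ¬ ∃ r₂ ∈ R, defeats r₂ r₁ ∧ ¬ DirOverrides lt r₁ r₂}

/-- D-preferred generating sets. -/
def DPrefGen (lt : Rule A → Rule A → Prop) (P R : Set (Rule A)) : Prop :=
  R = MP (dReduct lt P R)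

/-- D-preferred answer sets. -/
def DPrefAnswerSet (lt : Rule A → Rule A → Prop) (P : Set (Rule A))
    (S : Set (Lit A)) : Prop :=
  Consistent S ∧ ∃ R, DPrefGen lt P R ∧ headSet R = S

/-- Stratified programs. -/
def Stratified (P : Set (Rule A)) : Prop :=
  ∃ lam : Lit A → ℕ, ∀ r ∈ P,
    (∀ l ∈ r.pos, lam l ≤ lam r.head) ∧ (∀ l ∈ r.neg, lam l < lam r.head)

section AuxLemmas

lemma headSet_mono {R S : Set (Rule A)} (h : R ⊆ S) : headSet R ⊆ headSet S :=
  Set.image_mono (f := Rule.head) h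

lemma posSat_self (P : Set (Rule A)) : PosSat P P := ⟨subset_rfl, fun _ hr _ => hr⟩

lemma MP_subset {P R : Set (Rule A)} (h : PosSat P R) : MP P ⊆ R :=
  Set.sInter_subset_of_mem h

lemma MP_subset_self (P : Set (Rule A)) : MP P ⊆ P := MP_subset (posSat_self P)

lemma posSat_MP (P : Set (Rule A)) : PosSat P (MP P) := by
  refine ⟨MP_subset_self P, fun r hr hpos => ?_⟩
  intro R hR
  exact hR.2 r hr (hpos.trans (headSet_mono (Set.sInter_subset_of_mem hR)))

lemma MP_idem (P : Set (Rule A)) : MP (MP P) = MP P := by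
  apply Set.Subset.antisymm (MP_subset_self _)
  apply MP_subset
  refine ⟨(MP_subset_self (MP P)).trans (MP_subset_self P), fun r hr hpos => ?_⟩
  have hr' : r ∈ MP P :=
    (posSat_MP P).2 r hr (hpos.trans (headSet_mono (MP_subset_self (MP P))))
  exact (posSat_MP (MP P)).2 r hr' hpos

lemma grounded_subset_MP {X Q : Set (Rule A)} (hX : MP X = X) (hsub : X ⊆ Q) :
    X ⊆ MP Q := by
  have h1 : PosSat X (X ∩ MP Q) := by
    refine ⟨Set.inter_subset_left, fun r hr hpos => ?_⟩
    exact ⟨hr, (posSat_MP Q).2 r (hsub hr)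
      (hpos.trans (headSet_mono Set.inter_subset_right))⟩
  have h2 := MP_subset h1
  rw [hX] at h2
  exact fun r hr => (h2 hr).2

lemma exists_min {α : Type} (lt : α → α → Prop) (htrans : Transitive lt)
    (hasymm : ∀ a b, lt a b → ¬ lt b a) {D : Set α} (hfin : D.Finite)
    (hne : D.Nonempty) : ∃ m ∈ D, ∀ x ∈ D, ¬ lt x m := by
  haveI := hfin.to_subtype
  haveI : IsTrans D (fun a b : D => lt a b) := ⟨fun a b c hab hbc => htrans hab hbc⟩
  haveI : IsIrrefl D (fun a b : D => lt a b) := ⟨fun a h => hasymm _ _ h h⟩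
  have wf := Finite.wellFounded_of_trans_of_irrefl (fun a b : D => lt a b)
  obtain ⟨m, -, hm⟩ := wf.has_min Set.univ ⟨⟨hne.choose, hne.choose_spec⟩, trivial⟩
  exact ⟨m, m.2, fun x hx hlt => hm ⟨x, hx⟩ trivial hlt⟩

lemma no_mutual_override {P : Set (Rule A)} (hP : P.Finite)
    {lt : Rule A → Rule A → Prop} (htrans : Transitive lt)
    (hasymm : ∀ r₁ r₂, lt r₁ r₂ → ¬ lt r₂ r₁)
    {X Y : Set (Rule A)} (hX : X ⊆ P) (hY : Y ⊆ P)
    (h1 : Overrides lt X Y) (h2 : Overrides lt Y X) : False := by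
  set D : Set (Rule A) :=
    {r | (r ∈ X ∧ defeatsRule Y r) ∨ (r ∈ Y ∧ defeatsRule X r)} with hD
  have hDP : D ⊆ P := fun r hr => hr.elim (fun h => hX h.1) (fun h => hY h.1)
  have hfin : D.Finite := hP.subset hDP
  have hne : D.Nonempty := by
    obtain ⟨r, hrX, hdef⟩ := h1.1.2
    exact ⟨r, Or.inl ⟨hrX, hdef⟩⟩
  obtain ⟨m, hm, hmin⟩ := exists_min lt htrans hasymm hfin hne
  rcases hm with ⟨hmX, hdef⟩ | ⟨hmY, hdef⟩
  · obtain ⟨r₂, hr₂Y, hd2, hlt⟩ := h1.2 m hmX hdef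
    exact hmin r₂ (Or.inr ⟨hr₂Y, hd2⟩) hlt
  · obtain ⟨r₂, hr₂X, hd2, hlt⟩ := h2.2 m hmY hdef
    exact hmin r₂ (Or.inl ⟨hr₂X, hd2⟩) hlt

lemma levelCut_frag {P R : Set (Rule A)} (hRP : R ⊆ P) (hMR : MP R = R)
    (lam : Lit A → ℕ)
    (hlam : ∀ r ∈ P, (∀ l ∈ r.pos, lam l ≤ lam r.head) ∧
      (∀ l ∈ r.neg, lam l < lam r.head)) (k : ℕ) :
    MP {q ∈ R | lam q.head < k} = {q ∈ R | lam q.head < k} := by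
  set Y : Set (Rule A) := {q ∈ R | lam q.head < k} with hYdef
  apply Set.Subset.antisymm (MP_subset_self Y)
  have hps : PosSat R (MP Y ∪ (R \ Y)) := by
    constructor
    · exact Set.union_subset ((MP_subset_self Y).trans (fun q hq => hq.1))
        Set.diff_subset
    · intro r hr hpos
      by_cases hrY : lam r.head < k
      · left
        apply (posSat_MP Y).2 r ⟨hr, hrY⟩
        intro l hl
        have hlk : lam l ≤ lam r.head := (hlam r (hRP hr)).1 l hl
        obtain ⟨q, hq, hql⟩ := hpos hl
        rcases hq with hq | hq
        · exact ⟨q, hq, hql⟩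
        · exact absurd (hql ▸ lt_of_le_of_lt hlk hrY)
            (fun h => hq.2 ⟨hq.1, h⟩)
      · right; exact ⟨hr, fun h => hrY h.2⟩
  have h2 := MP_subset hps
  rw [hMR] at h2
  intro q hq
  rcases h2 hq.1 with h | h
  · exact h
  · exact absurd hq h.2

end AuxLemmas

/-- on stratified programs, semantics G coincides with the answer
set semantics. -/
theorem gPref_stratified_eq_answerSet (P : Set (Rule A)) (hP : P.Finite)
    (hstrat : Stratified P)
    (lt : Rule A → Rule A → Prop) (htrans : Transitive lt)
    (hasymm : ∀ r₁ r₂, lt r₁ r₂ → ¬ lt r₂ r₁)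
    (S : Set (Lit A)) :
    GPrefAnswerSet lt P S ↔ AnswerSet P S := by
  constructor
  · -- forward: G-preferred answer set → answer set
    rintro ⟨hcons, E, ⟨hEF, hfix⟩, hhead⟩
    set U : Set (Rule A) := ⋃₀ E with hU
    have hUP : U ⊆ P := Set.sUnion_subset (fun X hX => (hEF hX).1)
    -- no member of E defeats a member of E
    have hnodef : ∀ X ∈ E, ∀ Y ∈ E, ¬ defeatsSet Y X := by
      intro X hX Y hY hdef
      have hX' : X ∈ prefFragReduct lt P E := by rw [hfix]; exact hX
      have hY' : Y ∈ prefFragReduct lt P E := by rw [hfix]; exact hY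
      have hovXY : Overrides lt X Y := by
        by_contra hno
        exact hX'.2 ⟨Y, hY, hdef, hno⟩
      have hdefXY : defeatsSet X Y := hovXY.1.1
      have hovYX : Overrides lt Y X := by
        by_contra hno
        exact hY'.2 ⟨X, hX, hdefXY, hno⟩
      exact no_mutual_override hP htrans hasymm (hEF hX).1 (hEF hY).1 hovXY hovYX
    -- U is contained in the reduct
    have hUred : U ⊆ reduct P U := by
      rintro r hr
      obtain ⟨X, hXE, hrX⟩ := hr
      refine ⟨hUP ⟨X, hXE, hrX⟩, ?_⟩
      rintro ⟨l, hlU, hlneg⟩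
      obtain ⟨q, hqU, hql⟩ := hlU
      obtain ⟨Y, hYE, hqY⟩ := hqU
      exact hnodef X hXE Y hYE ⟨r, hrX, ⟨l, ⟨q, hqY, hql⟩, hlneg⟩⟩
    refine ⟨hcons, U, ⟨hUP, ?_⟩, hhead⟩
    apply Set.Subset.antisymm
    · -- U ⊆ MP (reduct P U)
      intro r hr
      obtain ⟨X, hXE, hrX⟩ := hr
      exact grounded_subset_MP (hEF hXE).2
        (fun s hs => hUred ⟨X, hXE, hs⟩) hrX
    · -- MP (reduct P U) ⊆ U
      set M : Set (Rule A) := MP (reduct P U) with hM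
      have hMfrag : M ∈ Frag P :=
        ⟨(MP_subset_self _).trans (fun r hr => hr.1), MP_idem _⟩
      have hME : M ∈ E := by
        rw [← hfix]
        refine ⟨hMfrag, ?_⟩
        rintro ⟨Y, hYE, ⟨q, hqM, l, hlY, hlneg⟩, -⟩
        have hq : q ∈ reduct P U := MP_subset_self _ hqM
        have hYU : Y ⊆ U := fun s hs => Set.mem_sUnion.2 ⟨Y, hYE, hs⟩
        exact hq.2 ⟨l, headSet_mono hYU hlY, hlneg⟩
      exact Set.subset_sUnion_of_mem hME
  · -- backward: answer set → G-preferred answer set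
    rintro ⟨hcons, R, ⟨hRP, hRfix⟩, hhead⟩
    obtain ⟨lam, hlam⟩ := hstrat
    have hMR : MP R = R := by
      conv_lhs => rw [hRfix]
      rw [MP_idem, ← hRfix]
    have hRred : R ⊆ reduct P R := by
      conv_lhs => rw [hRfix]
      exact MP_subset_self _
    have hRfrag : R ∈ Frag P := ⟨hRP, hMR⟩
    have hundef : ∀ q ∈ R, ¬ defeatsRule R q := fun q hq => (hRred hq).2
    set E : Set (Set (Rule A)) := {X | X ∈ Frag P ∧ X ⊆ R} with hE
    refine ⟨hcons, E, ⟨fun X hX => hX.1, ?_⟩, ?_⟩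
    · -- fixed point
      apply Set.Subset.antisymm
      · -- prefFragReduct ⊆ E
        rintro X ⟨⟨hXP, hXMP⟩, hXnd⟩
        refine ⟨⟨hXP, hXMP⟩, ?_⟩
        by_contra hns
        -- minimal level of a rule in X \ R
        have hTne : {m | ∃ r, r ∈ X ∧ r ∉ R ∧ lam r.head = m}.Nonempty := by
          obtain ⟨r, hrX, hrR⟩ := Set.not_subset.1 hns
          exact ⟨lam r.head, r, hrX, hrR, rfl⟩
        set k : ℕ := sInf {m | ∃ r, r ∈ X ∧ r ∉ R ∧ lam r.head = m} with hk
        -- some rule of X \ R at level k is defeated by R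
        have hC : ∃ r, r ∈ X ∧ r ∉ R ∧ lam r.head = k ∧ defeatsRule R r := by
          by_contra hC
          push_neg at hC
          have hZ : PosSat X {r ∈ X | r ∈ R ∨ k < lam r.head} := by
            refine ⟨fun r hr => hr.1, fun t ht hpos => ?_⟩
            by_cases htR : t ∈ R
            · exact ⟨ht, Or.inl htR⟩
            by_cases htk : k < lam t.head
            · exact ⟨ht, Or.inr htk⟩
            have htk' : lam t.head = k :=
              le_antisymm (not_lt.1 htk) (Nat.sInf_le ⟨t, ht, htR, rfl⟩)
            have hposR : t.pos ⊆ headSet R := by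
              intro l hl
              have hlk : lam l ≤ lam t.head := (hlam t (hXP ht)).1 l hl
              obtain ⟨q, hq, hql⟩ := hpos hl
              rcases hq.2 with hqR | hqk
              · exact ⟨q, hqR, hql⟩
              · exfalso
                rw [hql] at hqk
                exact absurd (hlk.trans_eq htk') (not_le.2 hqk)
            have htred : t ∈ reduct P R := ⟨hXP ht, hC t ht htR htk'⟩
            have : t ∈ MP (reduct P R) := by
              apply (posSat_MP _).2 t htred
              rwa [← hRfix]
            rw [← hRfix] at this
            exact absurd this htR
          obtain ⟨r, hrX, hrR, hrk⟩ := Nat.sInf_mem hTne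
          have := MP_subset hZ
          rw [hXMP] at this
          rcases (this hrX).2 with h | h
          · exact hrR h
          · exact absurd hrk (Nat.ne_of_gt h)
        obtain ⟨r, hrX, hrR, hrk, l, hlR, hlneg⟩ := hC
        have hlk : lam l < k := by
          rw [← hrk]; exact (hlam r (hXP hrX)).2 l hlneg
        set Y : Set (Rule A) := {q ∈ R | lam q.head < k} with hY
        have hYfrag : Y ∈ Frag P :=
          ⟨(fun q hq => hRP hq.1), levelCut_frag hRP hMR lam hlam k⟩
        have hYE : Y ∈ E := ⟨hYfrag, fun q hq => hq.1⟩
        have hdefYX : defeatsSet Y X := by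
          obtain ⟨q, hqR, hql⟩ := hlR
          refine ⟨r, hrX, l, ⟨q, ⟨hqR, ?_⟩, hql⟩, hlneg⟩
          rw [hql]; exact hlk
        have hnodefXY : ¬ defeatsSet X Y := by
          rintro ⟨q, hqY, l', hl'X, hl'neg⟩
          obtain ⟨s, hsX, hsl⟩ := hl'X
          by_cases hsR : s ∈ R
          · exact hundef q hqY.1 ⟨l', ⟨s, hsR, hsl⟩, hl'neg⟩
          · have h1 : lam l' < lam q.head := (hlam q (hRP hqY.1)).2 l' hl'neg
            have h2 : k ≤ lam s.head := Nat.sInf_le ⟨s, hsX, hsR, rfl⟩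
            rw [hsl] at h2
            exact absurd (h2.trans_lt (h1.trans hqY.2)) (lt_irrefl k)
        exact hXnd ⟨Y, hYE, hdefYX, fun hov => hnodefXY hov.1.1⟩
      · -- E ⊆ prefFragReduct
        rintro X ⟨hXfrag, hXR⟩
        refine ⟨hXfrag, ?_⟩
        rintro ⟨Y, hYE, ⟨r, hrX, l, hlY, hlneg⟩, -⟩
        exact hundef r (hXR hrX) ⟨l, headSet_mono hYE.2 hlY, hlneg⟩
    · -- heads
      have : ⋃₀ E = R := by
        apply Set.Subset.antisymm (Set.sUnion_subset (fun X hX => hX.2))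
        exact Set.subset_sUnion_of_mem ⟨hRfrag, subset_rfl⟩
      rw [this, hhead]
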